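/- Let d ≥ 2, n ≥ 2, let ω : ℝ → ℝ^d be C², let k_2, …, k_n ∈ ℤ^{d−1}, and let φ_2, …, φ_n : I → ℝ be C² on an open interval I ⊆ ℝ such that ⟨ω̃(s), k_j⟩ ≠ 0 for all s ∈ I and 2 ≤ j ≤ n, where ω̃(s) = (ω_1(s), …, ω_{d−1}(s)). Define H_n(θ, r) = ⟨ω(r_d), r⟩ − Σ_{j=2}^n φ_j(r_d) sin(2π⟨k_j, θ̃⟩), H_0(θ, r) = ⟨ω(r_d), r⟩, and Ψ_n(θ, r) = (θ̃, θ_d − (1/2π) Σ_{j=2}^n (d/ds)[φ_j(s)/⟨ω̃(s), k_j⟩] cos(2π⟨k_j, θ̃⟩), r̃ − Σ_{j=2}^n (φ_j(s)/⟨ω̃(s), k_j⟩) sin(2π⟨k_j, θ̃⟩) · k_j, s), where s = r_d. If (θ(t), r(t)) is a solution of Hamilton's equations for H_n on an interval J with r_d(t) ∈ I, then t ↦ Ψ_n(θ(t), r(t)) is a solution of Hamilton's equations for H_0 on J. -/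

import Mathlib

open Real Filter Set

noncomputable section

/-- The phase space `T^d × ℝ^d`, realized as pairs `(θ, r)` of functions `Fin d → ℝ`. -/
abbrev Phase (d : ℕ) := (Fin d → ℝ) × (Fin d → ℝ)

/-- `H` is `ℤ^d`-periodic in the angle variable `θ`. -/
def PeriodicTheta {d : ℕ} (H : Phase d → ℝ) : Prop :=
  ∀ (θ r : Fin d → ℝ) (m : Fin d → ℤ), H (fun i => θ i + (m i : ℝ), r) = H (θ, r)

/-- `H` is real entire: it is the restriction to `ℝ^d × ℝ^d` of a holomorphic
function on `ℂ^d × ℂ^d`. -/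
def RealEntire {d : ℕ} (H : Phase d → ℝ) : Prop :=
  ∃ F : (Fin d → ℂ) × (Fin d → ℂ) → ℂ, Differentiable ℂ F ∧
    ∀ θ r : Fin d → ℝ, F (fun i => (θ i : ℂ), fun i => (r i : ℂ)) = H (θ, r)

/-- `H` is of the form `(*)` with frequency `ω`:
`|H(θ,r) − ⟨ω,r⟩| ≤ C‖r‖²` for all `θ` and all `‖r‖ ≤ δ`. -/
def FormStar {d : ℕ} (H : Phase d → ℝ) (ω : Fin d → ℝ) : Prop :=
  ∃ C δ : ℝ, 0 < C ∧ 0 < δ ∧ ∀ θ r : Fin d → ℝ, ‖r‖ ≤ δ →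
    |H (θ, r) - ∑ i, ω i * r i| ≤ C * ‖r‖ ^ 2

/-- `(θ, r)` is a solution of Hamilton's equations for `H` on the set `J`:
`θ' = ∂H/∂r`, `r' = −∂H/∂θ`. -/
def IsSolutionOn {d : ℕ} (H : Phase d → ℝ) (θ r : ℝ → Fin d → ℝ) (J : Set ℝ) : Prop :=
  ∀ t ∈ J, ∀ i : Fin d,
    HasDerivWithinAt (fun u => θ u i) (fderiv ℝ H (θ t, r t) (0, Pi.single i 1)) J t ∧
    HasDerivWithinAt (fun u => r u i) (-(fderiv ℝ H (θ t, r t) (Pi.single i 1, 0))) J t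

/-- Embedding of the first `d − 1` indices into `Fin d`. -/
def emb (d : ℕ) : Fin (d - 1) → Fin d := Fin.castLE (Nat.sub_le d 1)

/-- The last index of `Fin d`. -/
def lst (d : ℕ) (hd : 0 < d) : Fin d := ⟨d - 1, Nat.sub_lt hd Nat.one_pos⟩

/-- `⟨ω̃(s), k_j⟩ = Σ_{i=1}^{d−1} ω_i(s) k_{j,i}`. -/
def Aj (d : ℕ) (ω : ℝ → Fin d → ℝ) (k : ℕ → Fin (d - 1) → ℤ) (j : ℕ) (s : ℝ) : ℝ :=
  ∑ i, ω s (emb d i) * (k j i : ℝ)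

/-- `H_n(θ, r) = ⟨ω(r_d), r⟩ − Σ_{j=2}^n φ_j(r_d) sin(2π⟨k_j, θ̃⟩)`. -/
def Hn (d n : ℕ) (hd : 0 < d) (ω : ℝ → Fin d → ℝ) (k : ℕ → Fin (d - 1) → ℤ)
    (φ : ℕ → ℝ → ℝ) (z : Phase d) : ℝ :=
  (∑ i, ω (z.2 (lst d hd)) i * z.2 i) -
    ∑ j ∈ Finset.Icc 2 n, φ j (z.2 (lst d hd)) *
      Real.sin (2 * π * ∑ i, (k j i : ℝ) * z.1 (emb d i))

/-- `H_0(θ, r) = ⟨ω(r_d), r⟩`. -/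
def H0 (d : ℕ) (hd : 0 < d) (ω : ℝ → Fin d → ℝ) (z : Phase d) : ℝ :=
  ∑ i, ω (z.2 (lst d hd)) i * z.2 i

/-- The map `Ψ_n(θ, r) = (θ̃, θ_d − (1/2π) Σ_j (d/ds)[φ_j(s)/⟨ω̃(s), k_j⟩] cos(2π⟨k_j, θ̃⟩),
r̃ − Σ_j (φ_j(s)/⟨ω̃(s), k_j⟩) sin(2π⟨k_j, θ̃⟩) k_j, s)`, with `s = r_d`. -/
def Psin (d n : ℕ) (hd : 0 < d) (ω : ℝ → Fin d → ℝ) (k : ℕ → Fin (d - 1) → ℤ)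
    (φ : ℕ → ℝ → ℝ) (z : Phase d) : Phase d :=
  (fun i => if i = lst d hd then
      z.1 (lst d hd) - (1 / (2 * π)) * ∑ j ∈ Finset.Icc 2 n,
        deriv (fun s => φ j s / Aj d ω k j s) (z.2 (lst d hd)) *
          Real.cos (2 * π * ∑ i', (k j i' : ℝ) * z.1 (emb d i'))
    else z.1 i,
   fun i => if h : (i : ℕ) < d - 1 then
      z.2 i - ∑ j ∈ Finset.Icc 2 n,
        (φ j (z.2 (lst d hd)) / Aj d ω k j (z.2 (lst d hd))) *
          Real.sin (2 * π * ∑ i', (k j i' : ℝ) * z.1 (emb d i')) * (k j ⟨i, h⟩ : ℝ)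
    else z.2 i)

-- aux CLMs
def pr1 (d : ℕ) (i : Fin d) : Phase d →L[ℝ] ℝ :=
  (ContinuousLinearMap.proj i).comp (ContinuousLinearMap.fst ℝ (Fin d → ℝ) (Fin d → ℝ))
def pr2 (d : ℕ) (i : Fin d) : Phase d →L[ℝ] ℝ :=
  (ContinuousLinearMap.proj i).comp (ContinuousLinearMap.snd ℝ (Fin d → ℝ) (Fin d → ℝ))
def Kmap (d : ℕ) (k : ℕ → Fin (d - 1) → ℤ) (j : ℕ) : Phase d →L[ℝ] ℝ :=
  ∑ i', (k j i' : ℝ) • pr1 d (emb d i')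

@[simp] lemma pr1_apply (d : ℕ) (i : Fin d) (z : Phase d) : pr1 d i z = z.1 i := rfl
@[simp] lemma pr2_apply (d : ℕ) (i : Fin d) (z : Phase d) : pr2 d i z = z.2 i := rfl
lemma Kmap_apply (d : ℕ) (k : ℕ → Fin (d-1) → ℤ) (j : ℕ) (z : Phase d) :
    Kmap d k j z = ∑ i', (k j i' : ℝ) * z.1 (emb d i') := by
  simp [Kmap]

lemma hasFDerivAt_H0 (d : ℕ) (hd : 0 < d) (ω : ℝ → Fin d → ℝ) (hω : ContDiff ℝ 2 ω)
    (θ r : Fin d → ℝ) :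
    HasFDerivAt (H0 d hd ω)
      (∑ i, (ω (r (lst d hd)) i • pr2 d i +
        r i • (deriv ω (r (lst d hd)) i • pr2 d (lst d hd)))) (θ, r) := by
  have key : ∀ i : Fin d, HasFDerivAt (fun z : Phase d => ω (z.2 (lst d hd)) i * z.2 i)
      (ω (r (lst d hd)) i • pr2 d i +
        r i • (deriv ω (r (lst d hd)) i • pr2 d (lst d hd))) (θ, r) := by
    intro i
    have hωd : HasDerivAt (fun u => ω u i) (deriv ω (r (lst d hd)) i) (r (lst d hd)) :=
      hasDerivAt_pi.mp (hω.differentiable (by norm_num)).differentiableAt.hasDerivAt i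
    exact (hωd.comp_hasFDerivAt (θ, r) (pr2 d (lst d hd)).hasFDerivAt).mul
      (pr2 d i).hasFDerivAt
  exact HasFDerivAt.fun_sum (fun i _ => key i)

lemma hasFDerivAt_Hn (d n : ℕ) (hd : 0 < d) (ω : ℝ → Fin d → ℝ) (hω : ContDiff ℝ 2 ω)
    (k : ℕ → Fin (d - 1) → ℤ) (φ : ℕ → ℝ → ℝ) (θ r : Fin d → ℝ)
    (hφd : ∀ j ∈ Finset.Icc 2 n, DifferentiableAt ℝ (φ j) (r (lst d hd))) :
    HasFDerivAt (Hn d n hd ω k φ)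
      ((∑ i, (ω (r (lst d hd)) i • pr2 d i +
          r i • (deriv ω (r (lst d hd)) i • pr2 d (lst d hd)))) -
        ∑ j ∈ Finset.Icc 2 n,
          (φ j (r (lst d hd)) •
              (Real.cos (2 * π * ∑ i, (k j i : ℝ) * θ (emb d i)) • ((2 * π) • Kmap d k j)) +
            Real.sin (2 * π * ∑ i, (k j i : ℝ) * θ (emb d i)) •
              (deriv (φ j) (r (lst d hd)) • pr2 d (lst d hd)))) (θ, r) := by
  refine HasFDerivAt.sub (hasFDerivAt_H0 d hd ω hω θ r) (HasFDerivAt.fun_sum fun j hj => ?_)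
  have hc : HasFDerivAt (fun z : Phase d => φ j (z.2 (lst d hd)))
      (deriv (φ j) (r (lst d hd)) • pr2 d (lst d hd)) (θ, r) :=
    (hφd j hj).hasDerivAt.comp_hasFDerivAt (θ, r) (pr2 d (lst d hd)).hasFDerivAt
  have hs : HasFDerivAt (fun z : Phase d => Real.sin (2 * π * Kmap d k j z))
      (Real.cos (2 * π * Kmap d k j (θ, r)) • ((2 * π) • Kmap d k j)) (θ, r) :=
    ((Kmap d k j).hasFDerivAt.const_mul (2 * π)).sin
  have := hc.fun_mul hs
  rw [Kmap_apply] at this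
  have heq : (fun z : Phase d => φ j (z.2 (lst d hd)) * Real.sin (2 * π * Kmap d k j z)) =
      fun z : Phase d => φ j (z.2 (lst d hd)) *
        Real.sin (2 * π * ∑ i, (k j i : ℝ) * z.1 (emb d i)) := by
    funext z; rw [Kmap_apply]
  rw [heq] at this
  exact this

lemma emb_ne_lst (d : ℕ) (hd : 0 < d) (i : Fin (d-1)) : emb d i ≠ lst d hd := by
  have hi := i.isLt
  intro h
  have h2 := congrArg Fin.val h
  simp only [emb, lst, Fin.coe_castLE] at h2
  omega

def LH0 (d : ℕ) (hd : 0 < d) (ω : ℝ → Fin d → ℝ) (r : Fin d → ℝ) : Phase d →L[ℝ] ℝ :=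
  ∑ i, (ω (r (lst d hd)) i • pr2 d i + r i • (deriv ω (r (lst d hd)) i • pr2 d (lst d hd)))

lemma LH0_apply_r (d : ℕ) (hd : 0 < d) (ω : ℝ → Fin d → ℝ) (r : Fin d → ℝ) (m : Fin d) :
    LH0 d hd ω r (0, Pi.single m 1) =
      (if m = lst d hd then ∑ i, r i * deriv ω (r (lst d hd)) i else 0) +
        ω (r (lst d hd)) m := by
  by_cases h : m = lst d hd <;>
    simp [LH0, ContinuousLinearMap.coe_sum', Finset.sum_apply,
      ContinuousLinearMap.add_apply, ContinuousLinearMap.smul_apply, pr2_apply,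
      smul_eq_mul, Pi.single_apply, Finset.sum_add_distrib, h, mul_ite, mul_one, mul_zero,
      Finset.sum_ite_eq', mul_comm, add_comm]

lemma LH0_apply_th (d : ℕ) (hd : 0 < d) (ω : ℝ → Fin d → ℝ) (r : Fin d → ℝ) (a : Fin d → ℝ) :
    LH0 d hd ω r (a, 0) = 0 := by
  simp [LH0, ContinuousLinearMap.coe_sum', Finset.sum_apply]

lemma Kmap_apply_r (d : ℕ) (k : ℕ → Fin (d-1) → ℤ) (j : ℕ) (b : Fin d → ℝ) :
    Kmap d k j (0, b) = 0 := by
  simp [Kmap_apply]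

lemma Kmap_apply_thL (d : ℕ) (hd : 0 < d) (k : ℕ → Fin (d-1) → ℤ) (j : ℕ) :
    Kmap d k j (Pi.single (lst d hd) 1, 0) = 0 := by
  rw [Kmap_apply]
  apply Finset.sum_eq_zero
  intro i _
  simp [Pi.single_apply, emb_ne_lst d hd i]

lemma Kmap_apply_th (d : ℕ) (k : ℕ → Fin (d-1) → ℤ) (j : ℕ) (m : Fin d)
    (h : (m : ℕ) < d - 1) :
    Kmap d k j (Pi.single m 1, 0) = (k j ⟨m, h⟩ : ℝ) := by
  rw [Kmap_apply]
  have : ∀ i : Fin (d-1), (Pi.single m 1 : Fin d → ℝ) (emb d i) = if i = ⟨m, h⟩ then 1 else 0 := by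
    intro i
    rw [Pi.single_apply]
    congr 1
    simp [emb, Fin.ext_iff]
  simp only [this, mul_ite, mul_one, mul_zero, Finset.sum_ite_eq', Finset.mem_univ, if_true]

def LHn (d n : ℕ) (hd : 0 < d) (ω : ℝ → Fin d → ℝ) (k : ℕ → Fin (d - 1) → ℤ)
    (φ : ℕ → ℝ → ℝ) (θ r : Fin d → ℝ) : Phase d →L[ℝ] ℝ :=
  LH0 d hd ω r -
    ∑ j ∈ Finset.Icc 2 n,
      (φ j (r (lst d hd)) •
          (Real.cos (2 * π * ∑ i, (k j i : ℝ) * θ (emb d i)) • ((2 * π) • Kmap d k j)) +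
        Real.sin (2 * π * ∑ i, (k j i : ℝ) * θ (emb d i)) •
          (deriv (φ j) (r (lst d hd)) • pr2 d (lst d hd)))

lemma hasFDerivAt_Hn' (d n : ℕ) (hd : 0 < d) (ω : ℝ → Fin d → ℝ) (hω : ContDiff ℝ 2 ω)
    (k : ℕ → Fin (d - 1) → ℤ) (φ : ℕ → ℝ → ℝ) (θ r : Fin d → ℝ)
    (hφd : ∀ j ∈ Finset.Icc 2 n, DifferentiableAt ℝ (φ j) (r (lst d hd))) :
    HasFDerivAt (Hn d n hd ω k φ) (LHn d n hd ω k φ θ r) (θ, r) :=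
  hasFDerivAt_Hn d n hd ω hω k φ θ r hφd

lemma hasFDerivAt_H0' (d : ℕ) (hd : 0 < d) (ω : ℝ → Fin d → ℝ) (hω : ContDiff ℝ 2 ω)
    (θ r : Fin d → ℝ) :
    HasFDerivAt (H0 d hd ω) (LH0 d hd ω r) (θ, r) :=
  hasFDerivAt_H0 d hd ω hω θ r

lemma LHn_apply_r (d n : ℕ) (hd : 0 < d) (ω : ℝ → Fin d → ℝ) (k : ℕ → Fin (d - 1) → ℤ)
    (φ : ℕ → ℝ → ℝ) (θ r : Fin d → ℝ) (m : Fin d) :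
    LHn d n hd ω k φ θ r (0, Pi.single m 1) =
      (if m = lst d hd then
        (∑ i, r i * deriv ω (r (lst d hd)) i) -
          ∑ j ∈ Finset.Icc 2 n,
            Real.sin (2 * π * ∑ i, (k j i : ℝ) * θ (emb d i)) * deriv (φ j) (r (lst d hd))
      else 0) + ω (r (lst d hd)) m := by
  simp only [LHn, ContinuousLinearMap.sub_apply, LH0_apply_r,
    ContinuousLinearMap.coe_sum', Finset.sum_apply, ContinuousLinearMap.add_apply,
    ContinuousLinearMap.smul_apply, Kmap_apply_r, pr2_apply, smul_eq_mul, mul_zero, zero_add,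
    Pi.single_apply]
  by_cases h : m = lst d hd
  · simp [h, mul_comm]
    ring
  · have : lst d hd ≠ m := fun hh => h hh.symm
    simp [h, this]

lemma LHn_apply_thL (d n : ℕ) (hd : 0 < d) (ω : ℝ → Fin d → ℝ) (k : ℕ → Fin (d - 1) → ℤ)
    (φ : ℕ → ℝ → ℝ) (θ r : Fin d → ℝ) :
    LHn d n hd ω k φ θ r (Pi.single (lst d hd) 1, 0) = 0 := by
  simp [LHn, ContinuousLinearMap.sub_apply, LH0_apply_th,
    ContinuousLinearMap.coe_sum', Finset.sum_apply, ContinuousLinearMap.add_apply,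
    ContinuousLinearMap.smul_apply, Kmap_apply_thL, pr2_apply]

lemma LHn_apply_th (d n : ℕ) (hd : 0 < d) (ω : ℝ → Fin d → ℝ) (k : ℕ → Fin (d - 1) → ℤ)
    (φ : ℕ → ℝ → ℝ) (θ r : Fin d → ℝ) (m : Fin d) (h : (m : ℕ) < d - 1) :
    LHn d n hd ω k φ θ r (Pi.single m 1, 0) =
      -∑ j ∈ Finset.Icc 2 n,
        φ j (r (lst d hd)) *
          (Real.cos (2 * π * ∑ i, (k j i : ℝ) * θ (emb d i)) * (2 * π * (k j ⟨m, h⟩ : ℝ))) := by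
  simp [LHn, ContinuousLinearMap.sub_apply, LH0_apply_th,
    ContinuousLinearMap.coe_sum', Finset.sum_apply, ContinuousLinearMap.add_apply,
    ContinuousLinearMap.smul_apply, Kmap_apply_th d k _ m h, pr2_apply, mul_assoc]

lemma contDiff_Aj (d : ℕ) (ω : ℝ → Fin d → ℝ) (hω : ContDiff ℝ 2 ω)
    (k : ℕ → Fin (d-1) → ℤ) (j : ℕ) : ContDiff ℝ 2 (Aj d ω k j) := by
  unfold Aj
  exact ContDiff.sum fun i _ => (contDiff_pi.mp hω (emb d i)).mul contDiff_const

lemma hasDerivAt_Aj (d : ℕ) (ω : ℝ → Fin d → ℝ) (hω : ContDiff ℝ 2 ω)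
    (k : ℕ → Fin (d-1) → ℤ) (j : ℕ) (s : ℝ) :
    HasDerivAt (Aj d ω k j) (∑ i, deriv ω s (emb d i) * (k j i : ℝ)) s := by
  unfold Aj
  apply HasDerivAt.fun_sum
  intro i _
  exact (hasDerivAt_pi.mp (hω.differentiable (by norm_num)).differentiableAt.hasDerivAt
    (emb d i)).mul_const _

lemma sum_split (d : ℕ) (hd : 0 < d) (F : Fin d → ℝ) :
    ∑ i, F i = (∑ i : Fin (d-1), F (emb d i)) + F (lst d hd) := by
  rw [← Finset.sum_erase_add Finset.univ F (Finset.mem_univ (lst d hd))]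
  congr 1
  refine Finset.sum_bij' (fun a ha => (⟨(a : ℕ), ?_⟩ : Fin (d-1)))
    (fun b _ => emb d b) (fun a ha => Finset.mem_univ _) (fun b _ => ?_) ?_ ?_ ?_
  · have h1 : a ≠ lst d hd := (Finset.mem_erase.mp ha).1
    have h2 : (a : ℕ) < d := a.isLt
    have h3 : (a : ℕ) ≠ d - 1 := fun hh => h1 (by apply Fin.ext; simpa [lst] using hh)
    omega
  · refine Finset.mem_erase.mpr ⟨emb_ne_lst d hd b, Finset.mem_univ _⟩
  · intro a ha; apply Fin.ext; rfl
  · intro b hb; apply Fin.ext; rfl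
  · intro a ha; rfl

lemma Psin_fst_lst (d n : ℕ) (hd : 0 < d) (ω : ℝ → Fin d → ℝ) (k : ℕ → Fin (d - 1) → ℤ)
    (φ : ℕ → ℝ → ℝ) (z : Phase d) :
    (Psin d n hd ω k φ z).1 (lst d hd) =
      z.1 (lst d hd) - (1 / (2 * π)) * ∑ j ∈ Finset.Icc 2 n,
        deriv (fun s => φ j s / Aj d ω k j s) (z.2 (lst d hd)) *
          Real.cos (2 * π * ∑ i', (k j i' : ℝ) * z.1 (emb d i')) := if_pos rfl

lemma Psin_fst_ne (d n : ℕ) (hd : 0 < d) (ω : ℝ → Fin d → ℝ) (k : ℕ → Fin (d - 1) → ℤ)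
    (φ : ℕ → ℝ → ℝ) (z : Phase d) (m : Fin d) (hm : m ≠ lst d hd) :
    (Psin d n hd ω k φ z).1 m = z.1 m := if_neg hm

lemma Psin_snd_lst (d n : ℕ) (hd : 0 < d) (ω : ℝ → Fin d → ℝ) (k : ℕ → Fin (d - 1) → ℤ)
    (φ : ℕ → ℝ → ℝ) (z : Phase d) :
    (Psin d n hd ω k φ z).2 (lst d hd) = z.2 (lst d hd) := dif_neg (by simp [lst])

lemma Psin_snd_lt (d n : ℕ) (hd : 0 < d) (ω : ℝ → Fin d → ℝ) (k : ℕ → Fin (d - 1) → ℤ)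
    (φ : ℕ → ℝ → ℝ) (z : Phase d) (m : Fin d) (h : (m : ℕ) < d - 1) :
    (Psin d n hd ω k φ z).2 m =
      z.2 m - ∑ j ∈ Finset.Icc 2 n,
        (φ j (z.2 (lst d hd)) / Aj d ω k j (z.2 (lst d hd))) *
          Real.sin (2 * π * ∑ i', (k j i' : ℝ) * z.1 (emb d i')) * (k j ⟨m, h⟩ : ℝ) := dif_pos h

lemma Psin_snd_emb (d n : ℕ) (hd : 0 < d) (ω : ℝ → Fin d → ℝ) (k : ℕ → Fin (d - 1) → ℤ)
    (φ : ℕ → ℝ → ℝ) (z : Phase d) (i' : Fin (d-1)) :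
    (Psin d n hd ω k φ z).2 (emb d i') =
      z.2 (emb d i') - ∑ j ∈ Finset.Icc 2 n,
        (φ j (z.2 (lst d hd)) / Aj d ω k j (z.2 (lst d hd))) *
          Real.sin (2 * π * ∑ i'', (k j i'' : ℝ) * z.1 (emb d i'')) * (k j i' : ℝ) := by
  rw [Psin_snd_lt d n hd ω k φ z (emb d i') i'.isLt]
  have hk : (⟨((emb d i' : Fin d) : ℕ), i'.isLt⟩ : Fin (d-1)) = i' := Fin.ext rfl
  rw [hk]


/-- Under the stated hypotheses, if `(θ(t), r(t))` is a solution of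
Hamilton's equations for `H_n` on an interval `J` with `r_d(t) ∈ I`, then
`t ↦ Ψ_n(θ(t), r(t))` is a solution of Hamilton's equations for `H_0` on `J`. -/
theorem statement15 (d n : ℕ) (hd : 2 ≤ d) (hn : 2 ≤ n)
    (ω : ℝ → Fin d → ℝ) (hω : ContDiff ℝ 2 ω)
    (k : ℕ → Fin (d - 1) → ℤ)
    (I : Set ℝ) (hIopen : IsOpen I) (hIconn : I.OrdConnected)
    (φ : ℕ → ℝ → ℝ) (hφ : ∀ j ∈ Finset.Icc 2 n, ContDiffOn ℝ 2 (φ j) I)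
    (hres : ∀ s ∈ I, ∀ j ∈ Finset.Icc 2 n, Aj d ω k j s ≠ 0)
    (θ r : ℝ → Fin d → ℝ) (J : Set ℝ)
    (hJI : ∀ t ∈ J, r t (lst d (by omega)) ∈ I)
    (hsol : IsSolutionOn (Hn d n (by omega) ω k φ) θ r J) :
    IsSolutionOn (H0 d (by omega) ω)
      (fun t => (Psin d n (by omega) ω k φ (θ t, r t)).1)
      (fun t => (Psin d n (by omega) ω k φ (θ t, r t)).2) J := by
  have hd0 : 0 < d := by omega
  intro t ht i
  have hsI : r t (lst d hd0) ∈ I := hJI t ht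
  have hπ : (π : ℝ) ≠ 0 := Real.pi_ne_zero
  have hφd : ∀ j ∈ Finset.Icc 2 n, DifferentiableAt ℝ (φ j) (r t (lst d hd0)) := fun j hj =>
    ((hφ j hj).differentiableOn (by norm_num)).differentiableAt (hIopen.mem_nhds hsI)
  have hFn := hasFDerivAt_Hn' d n hd0 ω hω k φ (θ t) (r t) hφd
  -- the solution ODEs with explicit right-hand sides
  have hθ' : ∀ m, HasDerivWithinAt (fun u => θ u m)
      (LHn d n hd0 ω k φ (θ t) (r t) (0, Pi.single m 1)) J t := fun m => by
    have h1 := (hsol t ht m).1; rwa [hFn.fderiv] at h1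
  have hr' : ∀ m, HasDerivWithinAt (fun u => r u m)
      (-(LHn d n hd0 ω k φ (θ t) (r t) (Pi.single m 1, 0))) J t := fun m => by
    have h1 := (hsol t ht m).2; rwa [hFn.fderiv] at h1
  have hθm : ∀ m, m ≠ lst d hd0 → HasDerivWithinAt (fun u => θ u m)
      (ω (r t (lst d hd0)) m) J t := fun m hm => by
    have h1 := hθ' m; rwa [LHn_apply_r, if_neg hm, zero_add] at h1
  have hθL : HasDerivWithinAt (fun u => θ u (lst d hd0))
      ((∑ i, r t i * deriv ω (r t (lst d hd0)) i) -
        (∑ j ∈ Finset.Icc 2 n,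
          Real.sin (2 * π * ∑ i, (k j i : ℝ) * θ t (emb d i)) *
            deriv (φ j) (r t (lst d hd0))) + ω (r t (lst d hd0)) (lst d hd0)) J t := by
    have h1 := hθ' (lst d hd0); rwa [LHn_apply_r, if_pos rfl] at h1
  have hrL : HasDerivWithinAt (fun u => r u (lst d hd0)) (-(0:ℝ)) J t := by
    have h1 := hr' (lst d hd0); rwa [LHn_apply_thL] at h1
  have hrL0 : HasDerivWithinAt (fun u => r u (lst d hd0)) 0 J t := by simpa using hrL
  have hrm : ∀ (m : Fin d) (h : (m : ℕ) < d - 1), HasDerivWithinAt (fun u => r u m)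
      (∑ j ∈ Finset.Icc 2 n, φ j (r t (lst d hd0)) *
        (Real.cos (2 * π * ∑ i, (k j i : ℝ) * θ t (emb d i)) *
          (2 * π * (k j ⟨m, h⟩ : ℝ)))) J t := fun m h => by
    have h1 := hr' m; rwa [LHn_apply_th d n hd0 ω k φ _ _ m h, neg_neg] at h1
  -- derivative of the phases K_j along the trajectory
  have hKd : ∀ j, HasDerivWithinAt (fun u => ∑ i', (k j i' : ℝ) * θ u (emb d i'))
      (Aj d ω k j (r t (lst d hd0))) J t := by
    intro j
    have h1 : HasDerivWithinAt (fun u => ∑ i', (k j i' : ℝ) * θ u (emb d i'))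
        (∑ i', (k j i' : ℝ) * ω (r t (lst d hd0)) (emb d i')) J t :=
      HasDerivWithinAt.fun_sum fun i' _ =>
        (hθm (emb d i') (emb_ne_lst d hd0 i')).const_mul _
    convert h1 using 1
    unfold Aj
    exact Finset.sum_congr rfl fun i' _ => mul_comm _ _
  have hsin : ∀ j, HasDerivWithinAt
      (fun u => Real.sin (2 * π * ∑ i', (k j i' : ℝ) * θ u (emb d i')))
      (Real.cos (2 * π * ∑ i', (k j i' : ℝ) * θ t (emb d i')) *
        (2 * π * Aj d ω k j (r t (lst d hd0)))) J t := fun j =>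
    ((hKd j).const_mul (2 * π)).sin
  have hcos : ∀ j, HasDerivWithinAt
      (fun u => Real.cos (2 * π * ∑ i', (k j i' : ℝ) * θ u (emb d i')))
      (-Real.sin (2 * π * ∑ i', (k j i' : ℝ) * θ t (emb d i')) *
        (2 * π * Aj d ω k j (r t (lst d hd0)))) J t := fun j =>
    ((hKd j).const_mul (2 * π)).cos
  -- facts about g_j = φ_j / A_j
  have hA0 : ∀ j ∈ Finset.Icc 2 n, Aj d ω k j (r t (lst d hd0)) ≠ 0 :=
    fun j hj => hres _ hsI j hj
  have hgC2 : ∀ j ∈ Finset.Icc 2 n,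
      ContDiffOn ℝ 2 (fun u => φ j u / Aj d ω k j u) I := fun j hj =>
    (hφ j hj).div (contDiff_Aj d ω hω k j).contDiffOn (fun x hx => hres x hx j hj)
  have hgd : ∀ j ∈ Finset.Icc 2 n,
      DifferentiableAt ℝ (fun u => φ j u / Aj d ω k j u) (r t (lst d hd0)) := fun j hj =>
    (((hgC2 j hj).differentiableOn (by norm_num)).differentiableAt (hIopen.mem_nhds hsI))
  have hg'd : ∀ j ∈ Finset.Icc 2 n,
      DifferentiableAt ℝ (deriv (fun u => φ j u / Aj d ω k j u)) (r t (lst d hd0)) := by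
    intro j hj
    have h1 : ContDiffOn ℝ 1 (deriv (fun u => φ j u / Aj d ω k j u)) I :=
      (hgC2 j hj).deriv_of_isOpen hIopen (by norm_num)
    exact (h1.differentiableOn (by norm_num)).differentiableAt (hIopen.mem_nhds hsI)
  have hgderiv : ∀ j ∈ Finset.Icc 2 n,
      deriv (fun u => φ j u / Aj d ω k j u) (r t (lst d hd0)) =
        (deriv (φ j) (r t (lst d hd0)) * Aj d ω k j (r t (lst d hd0)) -
          φ j (r t (lst d hd0)) *
            (∑ i', deriv ω (r t (lst d hd0)) (emb d i') * (k j i' : ℝ))) /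
          (Aj d ω k j (r t (lst d hd0)))^2 := fun j hj =>
    ((hφd j hj).hasDerivAt.div (hasDerivAt_Aj d ω hω k j _) (hA0 j hj)).deriv
  -- trajectory derivatives of g_j and g_j'
  have hgtraj : ∀ j ∈ Finset.Icc 2 n, HasDerivWithinAt
      (fun u => φ j (r u (lst d hd0)) / Aj d ω k j (r u (lst d hd0))) 0 J t := by
    intro j hj
    have h1 := (hgd j hj).hasDerivAt.comp_hasDerivWithinAt t hrL0
    simpa [Function.comp_def] using h1
  have hg'traj : ∀ j ∈ Finset.Icc 2 n, HasDerivWithinAt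
      (fun u => deriv (fun v => φ j v / Aj d ω k j v) (r u (lst d hd0))) 0 J t := by
    intro j hj
    have h1 := (hg'd j hj).hasDerivAt.comp_hasDerivWithinAt t hrL0
    simpa [Function.comp_def] using h1
  -- now the goal
  refine ⟨?_, ?_⟩
  · beta_reduce
    rw [(hasFDerivAt_H0' d hd0 ω hω _ _).fderiv, LH0_apply_r, Psin_snd_lst]
    by_cases hi : i = lst d hd0
    · rw [hi, if_pos rfl]
      show HasDerivWithinAt
        (fun u => (Psin d n hd0 ω k φ (θ u, r u)).1 (lst d hd0)) _ J t
      have hfun : (fun u => (Psin d n hd0 ω k φ (θ u, r u)).1 (lst d hd0)) =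
          fun u => θ u (lst d hd0) - (1 / (2 * π)) * ∑ j ∈ Finset.Icc 2 n,
            deriv (fun v => φ j v / Aj d ω k j v) (r u (lst d hd0)) *
              Real.cos (2 * π * ∑ i', (k j i' : ℝ) * θ u (emb d i')) := by
        funext u; exact Psin_fst_lst d n hd0 ω k φ (θ u, r u)
      rw [hfun]
      have hbig := hθL.fun_sub ((HasDerivWithinAt.fun_sum (u := Finset.Icc 2 n) fun j hj =>
        (hg'traj j hj).fun_mul (hcos j)).const_mul (1 / (2 * π)))
      convert hbig using 1
      · rfl
      · rfl
      rw [sum_split d hd0 (fun i => (Psin d n hd0 ω k φ (θ t, r t)).2 i *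
        deriv ω (r t (lst d hd0)) i)]
      simp only [Psin_snd_emb, Psin_snd_lst]
      rw [sum_split d hd0 (fun i => r t i * deriv ω (r t (lst d hd0)) i)]
      simp only [sub_mul, Finset.sum_sub_distrib, Finset.sum_mul]
      rw [Finset.sum_comm]
      have key : ∀ j ∈ Finset.Icc 2 n,
          (∑ i' : Fin (d-1), (φ j (r t (lst d hd0)) / Aj d ω k j (r t (lst d hd0)) *
              Real.sin (2 * π * ∑ i'', (k j i'' : ℝ) * θ t (emb d i'')) * (k j i' : ℝ)) *
                deriv ω (r t (lst d hd0)) (emb d i')) =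
            Real.sin (2 * π * ∑ i'', (k j i'' : ℝ) * θ t (emb d i'')) *
              deriv (φ j) (r t (lst d hd0)) +
            (1 / (2 * π)) * (0 * Real.cos (2 * π * ∑ i'', (k j i'' : ℝ) * θ t (emb d i'')) +
              deriv (fun v => φ j v / Aj d ω k j v) (r t (lst d hd0)) *
                (-Real.sin (2 * π * ∑ i'', (k j i'' : ℝ) * θ t (emb d i'')) *
                  (2 * π * Aj d ω k j (r t (lst d hd0))))) := by
        intro j hj
        have h1 : ∀ i' : Fin (d-1),
            (φ j (r t (lst d hd0)) / Aj d ω k j (r t (lst d hd0)) *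
              Real.sin (2 * π * ∑ i'', (k j i'' : ℝ) * θ t (emb d i'')) * (k j i' : ℝ)) *
                deriv ω (r t (lst d hd0)) (emb d i') =
            (φ j (r t (lst d hd0)) / Aj d ω k j (r t (lst d hd0)) *
              Real.sin (2 * π * ∑ i'', (k j i'' : ℝ) * θ t (emb d i''))) *
                (deriv ω (r t (lst d hd0)) (emb d i') * (k j i' : ℝ)) := fun i' => by ring
        rw [Finset.sum_congr rfl fun i' _ => h1 i', ← Finset.mul_sum, hgderiv j hj]
        have hA := hA0 j hj
        field_simp
        ring
      rw [Finset.sum_congr rfl key, Finset.sum_add_distrib, Finset.mul_sum]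
      ring
    · rw [if_neg hi, zero_add]
      have hfun : (fun u => (Psin d n hd0 ω k φ (θ u, r u)).1 i) = fun u => θ u i :=
        funext fun u => Psin_fst_ne d n hd0 ω k φ (θ u, r u) i hi
      rw [hfun]
      show HasDerivWithinAt (fun u => θ u i) (ω (r t (lst d hd0)) i) J t
      exact hθm i hi
  · -- r-equations
    rw [(hasFDerivAt_H0' d hd0 ω hω _ _).fderiv, LH0_apply_th, neg_zero]
    by_cases h : (i : ℕ) < d - 1
    · have hfun : (fun u => (Psin d n hd0 ω k φ (θ u, r u)).2 i) =
          fun u => r u i - ∑ j ∈ Finset.Icc 2 n,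
            (φ j (r u (lst d hd0)) / Aj d ω k j (r u (lst d hd0))) *
              Real.sin (2 * π * ∑ i', (k j i' : ℝ) * θ u (emb d i')) * (k j ⟨i, h⟩ : ℝ) := by
        funext u; exact Psin_snd_lt d n hd0 ω k φ (θ u, r u) i h
      show HasDerivWithinAt (fun u => (Psin d n hd0 ω k φ (θ u, r u)).2 i) 0 J t
      rw [hfun]
      have hbig := (hrm i h).fun_sub (HasDerivWithinAt.fun_sum (u := Finset.Icc 2 n) fun j hj =>
        ((hgtraj j hj).fun_mul (hsin j)).mul_const ((k j ⟨i, h⟩ : ℝ)))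
      convert hbig using 1
      · rfl
      · rfl
      rw [← Finset.sum_sub_distrib]
      symm
      apply Finset.sum_eq_zero
      intro j hj
      have hA := hA0 j hj
      field_simp
      ring
    · have hieq : i = lst d hd0 := by
        apply Fin.ext
        have h2 := i.isLt
        simp only [lst]
        omega
      rw [hieq]
      show HasDerivWithinAt (fun u => (Psin d n hd0 ω k φ (θ u, r u)).2 (lst d hd0)) 0 J t
      simp only [Psin_snd_lst]
      exact hrL0
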